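/- Let d ≡ 1 (mod 8) be a square-free integer with d ∉ {0,1}, and let I = {a + b√d ∈ Z[√d] : a ≡ b (mod 2)}. Then I is an ideal of Z[√d] of index 2, hence a maximal ideal, and it is the unique prime ideal of Z[√d] containing 2. -/

import Mathlib

open Polynomial in
/-- For a square-free integer `d ≡ 1 (mod 8)`, `d ∉ {0,1}`, the set
`I = {a + b√d : a ≡ b (mod 2)}` is an ideal of `ℤ[√d] = ℤ[X]/(X²-d)` of index 2,
hence maximal, and it is the unique prime ideal containing 2. -/
theorem ideal_I_maximal_unique_prime_over_two (d : ℤ) (hsf : Squarefree d)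
    (hd0 : d ≠ 0) (hd1 : d ≠ 1) (hd8 : d % 8 = 1) :
    ∃ I : Ideal (Polynomial ℤ ⧸ Ideal.span {(X : Polynomial ℤ) ^ 2 - C d}),
      (I : Set (Polynomial ℤ ⧸ Ideal.span {(X : Polynomial ℤ) ^ 2 - C d})) =
        {z | ∃ a b : ℤ, a ≡ b [ZMOD 2] ∧
          z = (a : Polynomial ℤ ⧸ Ideal.span {(X : Polynomial ℤ) ^ 2 - C d}) +
              (b : Polynomial ℤ ⧸ Ideal.span {(X : Polynomial ℤ) ^ 2 - C d}) *
                Ideal.Quotient.mk (Ideal.span {(X : Polynomial ℤ) ^ 2 - C d}) X} ∧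
      Nat.card ((Polynomial ℤ ⧸ Ideal.span {(X : Polynomial ℤ) ^ 2 - C d}) ⧸ I) = 2 ∧
      I.IsMaximal ∧
      ∀ P : Ideal (Polynomial ℤ ⧸ Ideal.span {(X : Polynomial ℤ) ^ 2 - C d}),
        P.IsPrime → (2 : Polynomial ℤ ⧸ Ideal.span {(X : Polynomial ℤ) ^ 2 - C d}) ∈ P →
          P = I := by
  haveI : Fact (Nat.Prime 2) := ⟨Nat.prime_two⟩
  set f : Polynomial ℤ := (X : Polynomial ℤ) ^ 2 - C d with hf
  set J : Ideal (Polynomial ℤ) := Ideal.span {f} with hJ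
  have hmon : f.Monic := monic_X_pow_sub_C d two_ne_zero
  have hd2 : (d : ZMod 2) = ((1 : ℤ) : ZMod 2) := by
    rw [ZMod.intCast_eq_intCast_iff]
    show d % 2 = 1 % 2
    omega
  -- the evaluation map ℤ[X] → ZMod 2, X ↦ 1
  set ψ : Polynomial ℤ →+* ZMod 2 := eval₂RingHom (Int.castRingHom (ZMod 2)) 1 with hψ
  have hψf : ψ f = 0 := by
    simp [hψ, hf, hd2]
  have hJker : ∀ a ∈ J, ψ a = 0 := by
    intro a ha
    rw [hJ, Ideal.mem_span_singleton] at ha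
    obtain ⟨c, rfl⟩ := ha
    rw [map_mul, hψf, zero_mul]
  set φ : (Polynomial ℤ ⧸ J) →+* ZMod 2 := Ideal.Quotient.lift J ψ hJker with hφ
  have hφmk : ∀ p : Polynomial ℤ, φ (Ideal.Quotient.mk J p) = ψ p := fun p =>
    Ideal.Quotient.lift_mk J ψ hJker
  have hsurj : Function.Surjective φ := by
    intro y
    obtain ⟨n, rfl⟩ := ZMod.intCast_surjective y
    exact ⟨Ideal.Quotient.mk J (C n), by simp [hφmk, hψ]⟩
  -- every element of the quotient has the form a + b·x
  have hCint : ∀ a : ℤ, Ideal.Quotient.mk J (C a) = (a : Polynomial ℤ ⧸ J) := by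
    intro a
    rw [eq_intCast (C : ℤ →+* Polynomial ℤ) a, map_intCast]
  have hrep : ∀ z : Polynomial ℤ ⧸ J, ∃ a b : ℤ,
      z = (a : Polynomial ℤ ⧸ J) + (b : Polynomial ℤ ⧸ J) * Ideal.Quotient.mk J X := by
    intro z
    obtain ⟨p, rfl⟩ := Ideal.Quotient.mk_surjective z
    refine ⟨(p %ₘ f).coeff 0, (p %ₘ f).coeff 1, ?_⟩
    have h1 : Ideal.Quotient.mk J p = Ideal.Quotient.mk J (p %ₘ f) := by
      rw [Ideal.Quotient.eq, modByMonic_eq_sub_mul_div p f]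
      simpa using Ideal.mul_mem_right (p /ₘ f) J (Ideal.subset_span rfl)
    have hdeg : (p %ₘ f).degree ≤ 1 := by
      have h2 := degree_modByMonic_lt p hmon
      rw [hf, degree_X_pow_sub_C (by norm_num) d] at h2
      exact Order.le_of_lt_succ (by exact_mod_cast h2)
    have h2 := eq_X_add_C_of_degree_le_one hdeg
    rw [h1]
    conv_lhs => rw [h2]
    rw [map_add, map_mul, hCint, hCint]
    ring
  have hφval : ∀ a b : ℤ,
      φ ((a : Polynomial ℤ ⧸ J) + (b : Polynomial ℤ ⧸ J) * Ideal.Quotient.mk J X)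
        = (a : ZMod 2) + (b : ZMod 2) := by
    intro a b
    have hx : φ (Ideal.Quotient.mk J X) = 1 := by simp [hφmk, hψ]
    rw [map_add, map_mul, hx, map_intCast, map_intCast, mul_one]
  refine ⟨RingHom.ker φ, ?_, ?_, RingHom.ker_isMaximal_of_surjective φ hsurj, ?_⟩
  · -- set equality
    ext z
    simp only [SetLike.mem_coe, RingHom.mem_ker, Set.mem_setOf_eq]
    constructor
    · intro hz
      obtain ⟨a, b, rfl⟩ := hrep z
      rw [hφval] at hz
      refine ⟨a, b, ?_, rfl⟩
      have h' : (a : ZMod 2) = (b : ZMod 2) := by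
        rw [eq_neg_of_add_eq_zero_left hz, CharTwo.neg_eq]
      exact_mod_cast (ZMod.intCast_eq_intCast_iff a b 2).mp h'
    · rintro ⟨a, b, hab, rfl⟩
      rw [hφval]
      have : (a : ZMod 2) = (b : ZMod 2) :=
        (ZMod.intCast_eq_intCast_iff a b 2).mpr (by exact_mod_cast hab)
      rw [this, CharTwo.add_self_eq_zero]
  · -- cardinality 2
    have e := RingHom.quotientKerEquivOfSurjective hsurj
    rw [Nat.card_congr e.toEquiv, Nat.card_zmod]
  · -- uniqueness of the prime over 2
    intro P hP h2P
    have hx2 : (Ideal.Quotient.mk J X) ^ 2 = ((d : ℤ) : Polynomial ℤ ⧸ J) := by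
      calc (Ideal.Quotient.mk J X) ^ 2 = Ideal.Quotient.mk J (X ^ 2) := (map_pow _ _ _).symm
        _ = Ideal.Quotient.mk J (C d) := Ideal.Quotient.eq.mpr (Ideal.subset_span rfl)
        _ = _ := hCint d
    obtain ⟨e, he⟩ : ∃ e : ℤ, d + 1 = 2 * e := ⟨(d + 1) / 2, by omega⟩
    have hcast : ((d : ℤ) : Polynomial ℤ ⧸ J) + 1 = 2 * ((e : ℤ) : Polynomial ℤ ⧸ J) := by
      have : ((d + 1 : ℤ) : Polynomial ℤ ⧸ J) = ((2 * e : ℤ) : Polynomial ℤ ⧸ J) := by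
        rw [he]
      push_cast at this
      linear_combination this
    have h1x : (1 + Ideal.Quotient.mk J X) ∈ P := by
      refine hP.mem_of_pow_mem 2 ?_
      have hsq : (1 + Ideal.Quotient.mk J X) ^ 2
          = 2 * (((e : ℤ) : Polynomial ℤ ⧸ J) + Ideal.Quotient.mk J X) := by
        linear_combination hx2 + hcast
      rw [hsq]
      exact Ideal.mul_mem_right _ P h2P
    have hPI : RingHom.ker φ ≤ P := by
      intro z hz
      rw [RingHom.mem_ker] at hz
      obtain ⟨a, b, rfl⟩ := hrep z
      rw [hφval] at hz
      have hab : a ≡ b [ZMOD 2] := by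
        have h' : (a : ZMod 2) = (b : ZMod 2) := by
          rw [eq_neg_of_add_eq_zero_left hz, CharTwo.neg_eq]
        exact_mod_cast (ZMod.intCast_eq_intCast_iff a b 2).mp h'
      obtain ⟨c, hc⟩ := Int.ModEq.dvd hab
      have hzeq : (a : Polynomial ℤ ⧸ J) + (b : Polynomial ℤ ⧸ J) * Ideal.Quotient.mk J X
          = 2 * ((-c : ℤ) : Polynomial ℤ ⧸ J)
            + (b : Polynomial ℤ ⧸ J) * (1 + Ideal.Quotient.mk J X) := by
        have ha : a = b + 2 * (-c) := by omega
        have : ((a : ℤ) : Polynomial ℤ ⧸ J) = ((b + 2 * (-c) : ℤ) : Polynomial ℤ ⧸ J) := by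
          rw [← ha]
        push_cast at this
        rw [this]
        push_cast
        ring
      rw [hzeq]
      exact add_mem (Ideal.mul_mem_right _ P h2P) (Ideal.mul_mem_left P _ h1x)
    exact ((RingHom.ker_isMaximal_of_surjective φ hsurj).eq_of_le hP.ne_top hPI).symm
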